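/- With q, N as above and the operators X1, X2, X3 on C^N defined from nonzero scalars y1, y2, y3, the resulting representation of the triangle algebra is irreducible: any linear subspace of C^N invariant under X1, X2, X3 is 0 or all of C^N. -/

import Mathlib

/-- `X1 e_i = y1 q^{2i} e_i`. -/
noncomputable def triX1 (N : ℕ) (q y1 : ℂ) : Matrix (Fin N) (Fin N) ℂ :=
  Matrix.diagonal fun i => y1 * q ^ (2 * (i : ℕ))

/-- `X2 e_i = y2 e_{i+1}` (indices mod `N`). -/
noncomputable def triX2 (N : ℕ) [NeZero N] (y2 : ℂ) : Matrix (Fin N) (Fin N) ℂ :=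
  Matrix.of fun j i => if j = i + 1 then y2 else 0

/-- `X3 e_i = y3 q^{1-2i} e_{i-1}` (indices mod `N`). -/
noncomputable def triX3 (N : ℕ) [NeZero N] (q y3 : ℂ) : Matrix (Fin N) (Fin N) ℂ :=
  Matrix.of fun j i => if j = i - 1 then y3 * q ^ ((1 : ℤ) - 2 * ((i : ℕ) : ℤ)) else 0

/-- The standard `N`-dimensional representation of the triangle algebra is irreducible:
any subspace invariant under `X1, X2, X3` is `0` or everything. -/
theorem triangle_standard_irreducible (N : ℕ) [NeZero N] (q : ℂ)
    (hq : IsPrimitiveRoot (q ^ 2) N) (hqN : q ^ N = (-1 : ℂ) ^ (N + 1))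
    (y1 y2 y3 : ℂ) (hy1 : y1 ≠ 0) (hy2 : y2 ≠ 0) (hy3 : y3 ≠ 0) :
    ∀ W : Submodule ℂ (Fin N → ℂ),
      (∀ v ∈ W, (triX1 N q y1).mulVec v ∈ W) →
      (∀ v ∈ W, (triX2 N y2).mulVec v ∈ W) →
      (∀ v ∈ W, (triX3 N q y3).mulVec v ∈ W) →
      W = ⊥ ∨ W = ⊤ := by
  intro W h1 h2 _
  by_cases hW : W = ⊥
  · exact Or.inl hW
  right
  obtain ⟨v, hvW, hv0⟩ := Submodule.exists_mem_ne_zero_of_ne_bot hW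
  obtain ⟨i, hvi⟩ : ∃ i, v i ≠ 0 := by
    by_contra h
    push_neg at h
    exact hv0 (funext h)
  set d : Fin N → ℂ := fun j => y1 * (q ^ 2) ^ (j : ℕ) with hd
  have hd1 : ∀ j : Fin N, y1 * q ^ (2 * (j : ℕ)) = d j := by
    intro j; rw [hd, pow_mul]
  -- powers
  have hpow : ∀ k : ℕ, (fun j => d j ^ k * v j) ∈ W := by
    intro k
    induction k with
    | zero => simpa using hvW
    | succ k ih =>
      have := h1 _ ih
      have heq : (triX1 N q y1).mulVec (fun j => d j ^ k * v j)
          = fun j => d j ^ (k + 1) * v j := by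
        funext j
        rw [triX1, Matrix.mulVec_diagonal, hd1]
        ring
      rwa [heq] at this
  have hpoly : ∀ p : Polynomial ℂ, (fun j => p.eval (d j) * v j) ∈ W := by
    intro p
    have heq : (fun j => p.eval (d j) * v j)
        = ∑ k ∈ Finset.range (p.natDegree + 1), p.coeff k • fun j => d j ^ k * v j := by
      funext j
      rw [Polynomial.eval_eq_sum_range]
      simp only [Finset.sum_apply, Pi.smul_apply, smul_eq_mul, Finset.sum_mul, mul_assoc]
    rw [heq]
    exact Submodule.sum_mem _ fun k _ => Submodule.smul_mem _ _ (hpow k)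
  have hdinj : Set.InjOn d ↑(Finset.univ : Finset (Fin N)) := by
    intro a _ b _ hab
    have h2 : (q ^ 2) ^ (a : ℕ) = (q ^ 2) ^ (b : ℕ) := mul_left_cancel₀ hy1 hab
    exact Fin.ext (hq.pow_inj a.isLt b.isLt h2)
  -- single i (v i) ∈ W
  have hsingle : (Pi.single i (v i) : Fin N → ℂ) ∈ W := by
    have := hpoly (Lagrange.basis Finset.univ d i)
    have heq : (fun j => (Lagrange.basis Finset.univ d i).eval (d j) * v j)
        = (Pi.single i (v i) : Fin N → ℂ) := by
      funext j
      by_cases hji : j = i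
      · rw [hji, Lagrange.eval_basis_self hdinj (Finset.mem_univ i)]
        simp
      · rw [Lagrange.eval_basis_of_ne (Ne.symm hji) (Finset.mem_univ j)]
        simp [Pi.single_eq_of_ne hji]
    rwa [heq] at this
  have hsingle1 : (Pi.single i 1 : Fin N → ℂ) ∈ W := by
    have := Submodule.smul_mem W (v i)⁻¹ hsingle
    have heq : (v i)⁻¹ • (Pi.single i (v i) : Fin N → ℂ) = (Pi.single i 1 : Fin N → ℂ) := by
      funext j
      by_cases hji : j = i
      · subst hji; simp [inv_mul_cancel₀ hvi]
      · simp [Pi.single_eq_of_ne hji]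
    rwa [heq] at this
  have hstep : ∀ j : Fin N, (Pi.single j 1 : Fin N → ℂ) ∈ W → (Pi.single (j + 1) 1 : Fin N → ℂ) ∈ W := by
    intro j hj
    have := h2 _ hj
    have heq : (triX2 N y2).mulVec ((Pi.single j 1 : Fin N → ℂ)) = y2 • (Pi.single (j + 1) 1 : Fin N → ℂ) := by
      funext k
      rw [Matrix.mulVec_single]
      by_cases hk : k = j + 1
      · subst hk; simp [triX2]
      · simp [triX2, hk, Pi.single_eq_of_ne hk]
    rw [heq] at this
    have := Submodule.smul_mem W y2⁻¹ this
    rwa [inv_smul_smul₀ hy2] at this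
  letI := Fin.NatCast.instNatCast N
  have hall : ∀ k : ℕ, (Pi.single (i + (k : Fin N)) 1 : Fin N → ℂ) ∈ W := by
    intro k
    induction k with
    | zero => simpa using hsingle1
    | succ k ih =>
      have hc : ((k + 1 : ℕ) : Fin N) = (k : Fin N) + 1 := by
          apply Fin.ext; show (k + 1) % N = (k % N + 1 % N) % N; exact Nat.add_mod _ _ _
      rw [hc, ← add_assoc]
      exact hstep _ ih
  have hallj : ∀ j : Fin N, (Pi.single j 1 : Fin N → ℂ) ∈ W := by
    intro j
    have := hall ((j - i : Fin N) : ℕ)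
    rwa [Fin.cast_val_eq_self, add_sub_cancel] at this
  rw [eq_top_iff]
  intro u _
  have : u = ∑ j, u j • (Pi.single j 1 : Fin N → ℂ) := by
    funext k
    simp [Finset.sum_apply, Pi.single_apply]
  rw [this]
  exact Submodule.sum_mem _ fun j _ => Submodule.smul_mem _ _ (hallj j)
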